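/- arXiv:1601.06873 — 8 statements merged into one kernel-verified Lean document; each statement's English description precedes it below -/
import Mathlib

section
/- Let G = (V, E, W) be a tree on N vertices with edge weights w_{ij} ∈ (-1,1), and let Σ be the N×N matrix with Σ_{ii} = 1, Σ_{ij} = product of edge weights along the unique path from i to j. Then det Σ = Π_{e_{ij} ∈ E} (1 - w_{ij}²). -/
open SimpleGraph Finset

lemma leaf_not_mem_support {V : Type*} {G : SimpleGraph V} {v u : V}
    (hv : ∀ a, G.Adj v a → a = u) {i j : V} (p : G.Walk i j)
    (hp : p.IsPath) (hi : i ≠ v) (hj : j ≠ v) : v ∉ p.support := by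
  induction p with
  | nil => simpa using hi.symm
  | @cons a c b h q ih =>
    rw [Walk.support_cons]
    rcases (Walk.cons_isPath_iff h q).mp hp with ⟨hq, hnot⟩
    intro hmem
    rcases List.mem_cons.mp hmem with rfl | hvs
    · exact hi rfl
    by_cases hc : c = v
    · subst hc
      have ha : a = u := hv a h.symm
      have hnil : ¬ q.Nil := Walk.not_nil_of_ne (Ne.symm hj)
      rcases Walk.not_nil_iff.mp hnil with ⟨b', h', q', rfl⟩
      have hb' : b' = u := hv b' h'
      apply hnot
      rw [Walk.support_cons]
      exact List.mem_cons_of_mem _ (ha ▸ hb' ▸ q'.start_mem_support)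
    · exact ih hq hc hj hvs

lemma reachable_avoid {V : Type*} {G : SimpleGraph V} {v : V} :
    ∀ {a b : V} (p : G.Walk a b) (ha : a ≠ v) (hb : b ≠ v), v ∉ p.support →
      (G.induce {x | x ≠ v}).Reachable ⟨a, ha⟩ ⟨b, hb⟩ := by
  intro a b p
  induction p with
  | nil => exact fun ha hb _ => Reachable.refl _
  | @cons a c b h q ih =>
    intro ha hb hs
    rw [Walk.support_cons] at hs
    have hsq : v ∉ q.support := fun h' => hs (List.mem_cons_of_mem _ h')
    have hc : c ≠ v := fun h' => hsq (h' ▸ q.start_mem_support)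
    have hadj : (G.induce {x | x ≠ v}).Adj ⟨a, ha⟩ ⟨c, hc⟩ := by
      simpa using h
    exact hadj.reachable.trans (ih hc hb hsq)

lemma tree_det : ∀ (n : ℕ) (V : Type) [Fintype V] [DecidableEq V]
    (G : SimpleGraph V) [Fintype G.edgeSet], Fintype.card V = n → G.IsTree →
    ∀ (w : Sym2 V → ℝ) (S : Matrix V V ℝ),
    (∀ i j (p : G.Walk i j), p.IsPath → S i j = (p.edges.map w).prod) →
    S.det = ∏ e ∈ G.edgeFinset, (1 - w e ^ 2) := by
  intro n
  induction n with
  | zero =>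
    intro V _ _ G _ hcard hG w S hS
    obtain ⟨x⟩ := hG.isConnected.nonempty
    have : 0 < Fintype.card V := Fintype.card_pos_iff.mpr ⟨x⟩
    omega
  | succ n ih =>
    intro V instV instDE G instE hcard hG w S hS
    by_cases hn : n = 0
    · -- one-vertex case
      subst hn
      obtain ⟨x, hx⟩ := Fintype.card_eq_one_iff.mp hcard
      haveI : Unique V := ⟨⟨x⟩, hx⟩
      have hedge : G.edgeFinset = ∅ := by
        apply Finset.eq_empty_of_forall_notMem
        intro e he
        rw [mem_edgeFinset] at he
        induction e with
        | _ a b =>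
          exact G.ne_of_adj (G.mem_edgeSet.mp he) ((hx a).trans (hx b).symm)
      rw [Matrix.det_unique, hedge, Finset.prod_empty]
      simpa using hS default default Walk.nil Walk.IsPath.nil
    · -- at least two vertices
      haveI hadjdec : DecidableRel G.Adj := Classical.decRel _
      have hinstE : instE = G.fintypeEdgeSet := Subsingleton.elim _ _
      subst hinstE
      have hcard2 : 2 ≤ Fintype.card V := by omega
      -- find a leaf
      have hdeg1 : ∃ v, G.degree v = 1 := by
        by_contra hcon
        push_neg at hcon
        have hge : ∀ v, 2 ≤ G.degree v := by
          intro v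
          have hpos : 0 < G.degree v := by
            obtain ⟨y, hy⟩ := Fintype.exists_ne_of_one_lt_card (by omega) v
            obtain ⟨p⟩ := hG.isConnected.preconnected v y
            have hnil : ¬ p.Nil := Walk.not_nil_of_ne (Ne.symm hy)
            exact (G.degree_pos_iff_exists_adj v).mpr
              ⟨p.getVert 1, Walk.adj_snd hnil⟩
          have := hcon v
          omega
        have hsum := G.sum_degrees_eq_twice_card_edges
        have hE := hG.card_edgeFinset
        have h2 : 2 * Fintype.card V ≤ ∑ v, G.degree v := by
          calc 2 * Fintype.card V = ∑ _v : V, 2 := by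
                simp [Finset.sum_const, mul_comm]
            _ ≤ _ := Finset.sum_le_sum fun v _ => hge v
        omega
      obtain ⟨v, hv⟩ := hdeg1
      obtain ⟨u, hu⟩ := Finset.card_eq_one.mp hv
      have hvu : G.Adj v u := by
        have : u ∈ G.neighborFinset v := hu ▸ Finset.mem_singleton_self u
        exact (G.mem_neighborFinset v u).mp this
      have huniq : ∀ a, G.Adj v a → a = u := fun a ha =>
        Finset.mem_singleton.mp (hu ▸ (G.mem_neighborFinset v a).mpr ha)
      have hune : u ≠ v := (G.ne_of_adj hvu).symm
      set W0 : ℝ := w s(v, u) with hW0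
      -- basic entries
      have hSvv : S v v = 1 := by simpa using hS v v Walk.nil Walk.IsPath.nil
      have hSuv : S u v = W0 := by
        have hpath : (Walk.cons hvu.symm Walk.nil).IsPath := by
          rw [Walk.cons_isPath_iff]
          exact ⟨Walk.IsPath.nil, by simpa using hune⟩
        have := hS u v _ hpath
        simpa [Sym2.eq_swap] using this
      have key : ∀ j, j ≠ v → S v j = W0 * S u j := by
        intro j hj
        obtain ⟨p, hp, -⟩ := hG.existsUnique_path u j
        have hvp : v ∉ p.support := leaf_not_mem_support huniq p hp hune hj
        have hq : (Walk.cons hvu p).IsPath := (Walk.cons_isPath_iff hvu p).mpr ⟨hp, hvp⟩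
        rw [hS v j _ hq, hS u j p hp]
        simp [hW0]
      -- row operation
      set M := S.updateRow v (S v - W0 • S u) with hM
      have hdetM : M.det = S.det := by
        have h := Matrix.det_updateRow_add_smul_self S (Ne.symm hune) (-W0)
        simpa [hM, sub_eq_add_neg, neg_smul] using h
      have hMvv : M v v = 1 - W0 ^ 2 := by
        simp [hM, Matrix.updateRow_self, hSvv, hSuv]
        ring
      have hMvj : ∀ j, j ≠ v → M v j = 0 := by
        intro j hj
        simp [hM, Matrix.updateRow_self, key j hj]
      have hMij : ∀ i, i ≠ v → ∀ j, M i j = S i j := by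
        intro i hi j
        simp [hM, Matrix.updateRow_ne hi]
      -- the induced graph
      set G' := G.induce {x | x ≠ v} with hG'
      haveI : DecidableRel G'.Adj := Classical.decRel _
      haveI : Fintype G'.edgeSet := inferInstance
      have hGtree' : G'.IsTree := by
        constructor
        · rw [connected_iff]
          refine ⟨fun x y => ?_, ⟨⟨u, hune⟩⟩⟩
          obtain ⟨p, hp, -⟩ := hG.existsUnique_path x.1 y.1
          have hvp : v ∉ p.support := leaf_not_mem_support huniq p hp x.2 y.2
          exact reachable_avoid p x.2 y.2 hvp
        · intro x c hc
          have hinj : Function.Injective ⇑(Embedding.induce {x | x ≠ v} : G' ↪g G).toHom :=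
            Subtype.val_injective
          exact hG.IsAcyclic (c.map (Embedding.induce {x | x ≠ v} : G' ↪g G).toHom)
            ((Walk.map_isCycle_iff_of_injective hinj).mpr hc)
      -- the submatrix
      set A : Matrix {x | x ≠ v} {x | x ≠ v} ℝ := fun i j => S i.1 j.1 with hA
      have hScard : Fintype.card {x | x ≠ v} = n := by
        have h1 : Fintype.card {x // ¬ (x = v)} = Fintype.card V - Fintype.card {x // x = v} :=
          Fintype.card_subtype_compl _
        rw [Fintype.card_subtype_eq] at h1
        have : Fintype.card {x | x ≠ v} = Fintype.card {x // ¬ (x = v)} := rfl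
        omega
      set w' : Sym2 {x | x ≠ v} → ℝ := fun e => w (Sym2.map Subtype.val e) with hw'
      have hS' : ∀ i j (p : G'.Walk i j), p.IsPath → A i j = (p.edges.map w').prod := by
        intro i j p hp
        have hinj : Function.Injective (Embedding.induce {x | x ≠ v} : G' ↪g G) :=
          Subtype.val_injective
        have hp2 : (p.map (Embedding.induce {x | x ≠ v}).toHom).IsPath :=
          Walk.map_isPath_of_injective hinj hp
        have := hS _ _ _ hp2
        rw [Walk.edges_map, List.map_map] at this
        exact this
      have hAdet : A.det = ∏ e ∈ G'.edgeFinset, (1 - w' e ^ 2) :=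
        ih {x | x ≠ v} G' hScard hGtree' w' A hS'
      -- block decomposition
      set e : ({x : V // x ≠ v} ⊕ {x : V // ¬ x ≠ v}) ≃ V := Equiv.sumCompl (· ≠ v) with he
      haveI : Unique {x : V // ¬ x ≠ v} :=
        ⟨⟨⟨v, not_not_intro rfl⟩⟩, fun a => Subtype.ext (not_not.mp a.2)⟩
      set B : Matrix {x : V // x ≠ v} {x : V // ¬ x ≠ v} ℝ := fun i _ => S i.1 v with hB
      set D : Matrix {x : V // ¬ x ≠ v} {x : V // ¬ x ≠ v} ℝ := fun _ _ => 1 - W0 ^ 2 with hD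
      have hblock : M.submatrix e e = Matrix.fromBlocks A B 0 D := by
        ext i j
        cases i with
        | inl i =>
          cases j with
          | inl j =>
            simp only [Matrix.submatrix_apply, he, Equiv.sumCompl_apply_inl,
              Matrix.fromBlocks_apply₁₁]
            exact hMij i.1 i.2 j.1
          | inr j =>
            have hjv : j.1 = v := not_not.mp j.2
            simp only [Matrix.submatrix_apply, he, Equiv.sumCompl_apply_inl,
              Equiv.sumCompl_apply_inr, Matrix.fromBlocks_apply₁₂]
            rw [hjv]
            exact hMij i.1 i.2 v
        | inr i =>
          have hiv : i.1 = v := not_not.mp i.2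
          cases j with
          | inl j =>
            simp only [Matrix.submatrix_apply, he, Equiv.sumCompl_apply_inl,
              Equiv.sumCompl_apply_inr, Matrix.fromBlocks_apply₂₁, Matrix.zero_apply]
            rw [hiv]
            exact hMvj j.1 j.2
          | inr j =>
            have hjv : j.1 = v := not_not.mp j.2
            simp only [Matrix.submatrix_apply, he, Equiv.sumCompl_apply_inr,
              Matrix.fromBlocks_apply₂₂, hD]
            rw [hiv, hjv]
            exact hMvv
      have hDdet : D.det = 1 - W0 ^ 2 := by rw [Matrix.det_unique]
      have hdet2 : M.det = A.det * (1 - W0 ^ 2) := by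
        rw [← Matrix.det_submatrix_equiv_self e M, hblock,
          Matrix.det_fromBlocks_zero₂₁, hDdet]
      -- edge set decomposition
      have hnotmem : s(v, u) ∉ G'.edgeFinset.image (Sym2.map Subtype.val) := by
        rw [Finset.mem_image]
        rintro ⟨e', he', heq⟩
        have hvmem : v ∈ Sym2.map Subtype.val e' := by
          rw [heq]; exact Sym2.mem_mk_left v u
        rcases Sym2.mem_map.mp hvmem with ⟨x, hx, hxv⟩
        exact x.2 hxv
      have himg : G.edgeFinset = insert s(v, u) (G'.edgeFinset.image (Sym2.map Subtype.val)) := by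
        ext e0
        simp only [Finset.mem_insert, Finset.mem_image, mem_edgeFinset]
        constructor
        · refine Sym2.ind (fun a b hab => ?_) e0
          rw [mem_edgeSet] at hab
          by_cases hav : a = v
          · subst hav
            left
            rw [huniq b hab]
          by_cases hbv : b = v
          · subst hbv
            left
            rw [huniq a hab.symm, Sym2.eq_swap]
          · right
            refine ⟨s(⟨a, hav⟩, ⟨b, hbv⟩), ?_, by simp⟩
            rw [mem_edgeSet]
            exact hab
        · rintro (rfl | ⟨e', he', rfl⟩)
          · exact hvu
          · revert he'
            refine Sym2.ind (fun x y hxy => ?_) e'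
            rw [mem_edgeSet] at hxy
            rw [Sym2.map_pair_eq, mem_edgeSet]
            exact hxy
      have hprod : ∏ e ∈ G.edgeFinset, (1 - w e ^ 2)
          = (1 - W0 ^ 2) * ∏ e ∈ G'.edgeFinset, (1 - w' e ^ 2) := by
        rw [himg, Finset.prod_insert hnotmem, Finset.prod_image]
        intro x _ y _ hxy
        exact Sym2.map.injective Subtype.val_injective hxy
      rw [← hdetM, hdet2, hAdet, hprod, mul_comm]

/-- The determinant of the normalized covariance matrix of a Gaussian tree is
the product of `1 - w_e²` over the edges of the tree. -/
theorem stmt_4 (N : ℕ) (G : SimpleGraph (Fin N)) (hG : G.IsTree)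
    [Fintype G.edgeSet]
    (w : Sym2 (Fin N) → ℝ) (hw : ∀ e ∈ G.edgeSet, |w e| < 1)
    (S : Matrix (Fin N) (Fin N) ℝ)
    (hS : ∀ (i j : Fin N) (p : G.Walk i j), p.IsPath →
      S i j = (p.edges.map w).prod) :
    S.det = ∏ e ∈ G.edgeFinset, (1 - w e ^ 2) := by
  exact tree_det N (Fin N) G (Fintype.card_fin N) hG w S hS
end

section
/- Let G = (V, E, W) be a tree on N vertices with edge weights w_{ij} ∈ (-1,1) and Σ its normalized covariance matrix. Then the inverse U = Σ⁻¹ has entries: U_{ij} = -w_{ij}/(1 - w_{ij}²) if i ≠ j and e_{ij} ∈ E; U_{ij} = 0 if i ≠ j and e_{ij} ∉ E; and U_{ii} = 1 + Σ_{p : e_{ip} ∈ E} w_{ip}²/(1 - w_{ip}²). -/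
open SimpleGraph Finset

section Aux
variable {N : ℕ} {G : SimpleGraph (Fin N)}
  {w : Sym2 (Fin N) → ℝ} {S : Matrix (Fin N) (Fin N) ℝ}

lemma stmt5_S_diag
    (hS : ∀ (i j : Fin N) (p : G.Walk i j), p.IsPath → S i j = (p.edges.map w).prod)
    (i : Fin N) : S i i = 1 := by
  simpa using hS i i Walk.nil Walk.IsPath.nil

lemma stmt5_S_adj
    (hS : ∀ (i j : Fin N) (p : G.Walk i j), p.IsPath → S i j = (p.edges.map w).prod)
    {i j : Fin N} (h : G.Adj i j) : S i j = w s(i, j) := by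
  have hp : (Walk.cons h Walk.nil).IsPath := by
    simp [Walk.cons_isPath_iff, h.ne]
  simpa using hS i j (Walk.cons h Walk.nil) hp

lemma stmt5_key (hG : G.IsTree)
    (hS : ∀ (i j : Fin N) (p : G.Walk i j), p.IsPath → S i j = (p.edges.map w).prod)
    {i j : Fin N} (hij : i ≠ j) :
    ∃ pstar, G.Adj i pstar ∧ S i j = w s(i, pstar) * S pstar j ∧
      ∀ p, G.Adj i p → p ≠ pstar → S p j = w s(i, p) * S i j := by
  obtain ⟨P, hP, _⟩ := hG.existsUnique_path i j
  cases P with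
  | nil => exact absurd rfl hij
  | @cons _ b _ h q =>
    rw [Walk.cons_isPath_iff] at hP
    obtain ⟨hq, hiq⟩ := hP
    refine ⟨b, h, ?_, ?_⟩
    · have h1 := hS i j (Walk.cons h q) (by rw [Walk.cons_isPath_iff]; exact ⟨hq, hiq⟩)
      have h2 := hS b j q hq
      simp [h1, h2]
    · intro p hip hpb
      have hpsup : p ∉ (Walk.cons h q).support := by
        simp only [Walk.support_cons, List.mem_cons]
        rintro (rfl | hpq)
        · exact hip.ne rfl
        · have hT : (q.takeUntil p hpq).IsPath := hq.takeUntil hpq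
          have hiT : i ∉ (q.takeUntil p hpq).support :=
            fun hmem => hiq (Walk.support_takeUntil_subset q hpq hmem)
          have hP1 : (Walk.cons h (q.takeUntil p hpq)).IsPath := by
            rw [Walk.cons_isPath_iff]; exact ⟨hT, hiT⟩
          have hP2 : (Walk.cons hip Walk.nil).IsPath := by
            simp [Walk.cons_isPath_iff, hip.ne]
          have := (hG.existsUnique_path i p).unique hP1 hP2
          have hv := congrArg (fun W : G.Walk i p => W.getVert 1) this
          simp only [Walk.getVert_cons_succ, Walk.getVert_zero] at hv
          exact hpb hv.symm
      have hPath : (Walk.cons hip.symm (Walk.cons h q)).IsPath := by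
        rw [Walk.cons_isPath_iff]
        exact ⟨by rw [Walk.cons_isPath_iff]; exact ⟨hq, hiq⟩, hpsup⟩
      have h1 := hS p j _ hPath
      have h2 := hS i j (Walk.cons h q) (by rw [Walk.cons_isPath_iff]; exact ⟨hq, hiq⟩)
      rw [h1, h2]
      simp [Sym2.eq_swap]

lemma stmt5_mul (hG : G.IsTree) [DecidableRel G.Adj]
    (hw : ∀ e ∈ G.edgeSet, |w e| < 1)
    (hS : ∀ (i j : Fin N) (p : G.Walk i j), p.IsPath → S i j = (p.edges.map w).prod) :
    (Matrix.of fun i j : Fin N =>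
      if i = j then
        1 + ∑ p ∈ univ.filter (fun p => G.Adj i p), w s(i, p) ^ 2 / (1 - w s(i, p) ^ 2)
      else if G.Adj i j then -(w s(i, j)) / (1 - w s(i, j) ^ 2) else 0) * S = 1 := by
  ext i j
  rw [Matrix.mul_apply, Matrix.one_apply]
  set U : Matrix (Fin N) (Fin N) ℝ := Matrix.of fun i j : Fin N =>
      if i = j then
        1 + ∑ p ∈ univ.filter (fun p => G.Adj i p), w s(i, p) ^ 2 / (1 - w s(i, p) ^ 2)
      else if G.Adj i j then -(w s(i, j)) / (1 - w s(i, j) ^ 2) else 0 with hU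
  set A : Finset (Fin N) := univ.filter (fun p => G.Adj i p) with hA
  have hiA : i ∉ A := by simp [hA]
  have hUii : U i i = 1 + ∑ p ∈ A, w s(i, p) ^ 2 / (1 - w s(i, p) ^ 2) := by
    simp [hU, hA]
  have hUadj : ∀ p ∈ A, U i p = -(w s(i, p)) / (1 - w s(i, p) ^ 2) := by
    intro p hp
    rw [hA, mem_filter] at hp
    simp [hU, hp.2, hp.2.ne]
  have hsum : ∑ k : Fin N, U i k * S k j = ∑ k ∈ insert i A, U i k * S k j := by
    refine (Finset.sum_subset (Finset.subset_univ _) ?_).symm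
    intro x _ hx
    simp only [Finset.mem_insert, hA, mem_filter, mem_univ, true_and, not_or] at hx
    have : U i x = 0 := by simp [hU, Ne.symm hx.1, hx.2]
    simp [this]
  rw [hsum, Finset.sum_insert hiA, hUii]
  by_cases hij : i = j
  · subst hij
    rw [if_pos rfl, stmt5_S_diag hS]
    have hterm : ∀ p ∈ A, U i p * S p i = -(w s(i, p) ^ 2 / (1 - w s(i, p) ^ 2)) := by
      intro p hp
      have hadj : G.Adj i p := by rw [hA, mem_filter] at hp; exact hp.2
      rw [hUadj p hp, stmt5_S_adj hS hadj.symm, Sym2.eq_swap]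
      ring
    rw [Finset.sum_congr rfl hterm, Finset.sum_neg_distrib]
    ring
  · rw [if_neg hij]
    obtain ⟨ps, hadj, hrec, hoth⟩ := stmt5_key hG hS hij
    have hps : ps ∈ A := by simp [hA, hadj]
    have hc : 1 - w s(i, ps) ^ 2 ≠ 0 := by
      have h1 := abs_lt.mp (hw s(i, ps) hadj)
      nlinarith [h1.1, h1.2]
    rw [← Finset.add_sum_erase A (fun p => U i p * S p j) hps, ← Finset.add_sum_erase A (fun p => w s(i, p) ^ 2 / (1 - w s(i, p) ^ 2)) hps]
    have hterm : ∀ p ∈ A.erase ps, U i p * S p j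
        = -(w s(i, p) ^ 2 / (1 - w s(i, p) ^ 2) * S i j) := by
      intro p hp
      rw [Finset.mem_erase] at hp
      have hadj' : G.Adj i p := by have := hp.2; rw [hA, mem_filter] at this; exact this.2
      rw [hUadj p hp.2, hoth p hadj' hp.1]
      ring
    rw [Finset.sum_congr rfl hterm, Finset.sum_neg_distrib, ← Finset.sum_mul,
      hUadj ps hps, hrec]
    field_simp
    ring
end Aux

/-- The inverse of the normalized covariance matrix of a Gaussian tree is
sparse: off-diagonal entries are `-w/(1-w²)` on tree edges and `0` otherwise,
and the diagonal entries are `1 + Σ_{p : e_{ip} ∈ E} w_{ip}²/(1-w_{ip}²)`. -/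
theorem stmt_5 (N : ℕ) (G : SimpleGraph (Fin N)) (hG : G.IsTree)
    [DecidableRel G.Adj]
    (w : Sym2 (Fin N) → ℝ) (hw : ∀ e ∈ G.edgeSet, |w e| < 1)
    (S : Matrix (Fin N) (Fin N) ℝ)
    (hS : ∀ (i j : Fin N) (p : G.Walk i j), p.IsPath →
      S i j = (p.edges.map w).prod) :
    (∀ i j : Fin N, i ≠ j → G.Adj i j →
        S⁻¹ i j = -(w s(i, j)) / (1 - w s(i, j) ^ 2)) ∧
    (∀ i j : Fin N, i ≠ j → ¬ G.Adj i j → S⁻¹ i j = 0) ∧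
    (∀ i : Fin N, S⁻¹ i i =
        1 + ∑ p ∈ univ.filter (fun p => G.Adj i p),
              w s(i, p) ^ 2 / (1 - w s(i, p) ^ 2)) := by
  have hinv := Matrix.inv_eq_left_inv (stmt5_mul hG hw hS)
  refine ⟨?_, ?_, ?_⟩
  · intro i j hij hadj
    rw [hinv]; simp [hij, hadj]
  · intro i j hij hnadj
    rw [hinv]; simp [hij, hnadj]
  · intro i
    rw [hinv]; simp
end

section
/- The Chernoff information between N(0, σ₁²) and N(0, σ₂²) with σ₁² ≠ σ₂² equals g(x) where x = σ₂²/σ₁² and g(x) = (1/2){ln((x−1)/(e·ln x)) + (ln x)/(x−1)}. Specifically, with σ'² = ln(σ₂²/σ₁²)·σ₁²σ₂²/(σ₂² − σ₁²), one has D(σ'²||σ₁²) = D(σ'²||σ₂²) = g(σ₂²/σ₁²). -/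
/-- KL divergence between `N(0,σ²)` and `N(0,τ²)` (closed form). -/
noncomputable def gaussKL (s t : ℝ) : ℝ :=
  (1/2) * Real.log (t / s) + s / (2 * t) - 1/2

/-- The scalar Gaussian Chernoff information as a function of the variance
ratio. -/
noncomputable def gFun (x : ℝ) : ℝ :=
  (1/2) * (Real.log ((x - 1) / (Real.exp 1 * Real.log x)) + Real.log x / (x - 1))

/-- With `σ'² = ln(σ₂²/σ₁²)·σ₁²σ₂²/(σ₂²-σ₁²)`, the two KL divergences to the
endpoints coincide and both equal `g(σ₂²/σ₁²)`: the Chernoff information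
between `N(0,σ₁²)` and `N(0,σ₂²)` is `g(σ₂²/σ₁²)`. -/
theorem stmt_7 (s1 s2 : ℝ) (hs1 : 0 < s1) (hs2 : 0 < s2) (hne : s1 ≠ s2) :
    gaussKL (Real.log (s2 / s1) * (s1 * s2) / (s2 - s1)) s1 = gFun (s2 / s1) ∧
    gaussKL (Real.log (s2 / s1) * (s1 * s2) / (s2 - s1)) s2 = gFun (s2 / s1) := by
  have hd : s2 - s1 ≠ 0 := sub_ne_zero.mpr (Ne.symm hne)
  have hx1 : s2 / s1 ≠ 1 := by
    rw [Ne, div_eq_one_iff_eq hs1.ne']; exact Ne.symm hne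
  have hxpos : 0 < s2 / s1 := div_pos hs2 hs1
  unfold gaussKL gFun
  set L := Real.log (s2 / s1) with hLdef
  have hL : L ≠ 0 := Real.log_ne_zero_of_pos_of_ne_one hxpos hx1
  have hLval : L = Real.log s2 - Real.log s1 := Real.log_div hs2.ne' hs1.ne'
  have hexp : Real.exp 1 ≠ 0 := (Real.exp_pos 1).ne'
  have hgarg : (s2 / s1 - 1) / (Real.exp 1 * L)
      = (s2 - s1) / (s1 * (Real.exp 1 * L)) := by
    field_simp
  have hglog : Real.log ((s2 / s1 - 1) / (Real.exp 1 * L))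
      = Real.log (s2 - s1) - (Real.log s1 + (1 + Real.log L)) := by
    rw [hgarg, Real.log_div hd (mul_ne_zero hs1.ne' (mul_ne_zero hexp hL)),
      Real.log_mul hs1.ne' (mul_ne_zero hexp hL), Real.log_mul hexp hL, Real.log_exp]
  constructor
  · have h1 : s1 / (L * (s1 * s2) / (s2 - s1)) = (s2 - s1) / (L * s2) := by
      field_simp
    rw [h1, Real.log_div hd (mul_ne_zero hL hs2.ne'), Real.log_mul hL hs2.ne', hglog, hLval]
    field_simp
    ring
  · have h1 : s2 / (L * (s1 * s2) / (s2 - s1)) = (s2 - s1) / (L * s1) := by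
      field_simp
    rw [h1, Real.log_div hd (mul_ne_zero hL hs1.ne'), Real.log_mul hL hs1.ne', hglog, hLval]
    field_simp
    ring
end

section
/- Let Σ₁ and Σ₂ be the covariance matrices of the two 3-node Gaussian trees: Σ₁ = [[1, w₁, w₁w₂],[w₁, 1, w₂],[w₁w₂, w₂, 1]] (chain 1–2–3 with weights w₁, w₂) and Σ₂ = [[1, w₁, w₂],[w₁, 1, w₁w₂],[w₂, w₁w₂, 1]] (chain 2–1–3 with weights w₁, w₂), with |w₁| < 1, 0 < |w₂| < 1, w₁ ≠ 1. Then the eigenvalues of S = Σ₁Σ₂⁻¹ are {1, λ_max, 1/λ_max}, where λ_max = (√β + w₂)/(√β − w₂) and β = w₂² + 2(1 − w₂²)/(1 − w₁). -/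
open Matrix

/-- The generalized eigenvalues of the covariance matrices of the two 3-node
Gaussian trees related by an edge-grafting operation, i.e. the eigenvalues of
`S = Σ₁Σ₂⁻¹`, are `{1, λ_max, 1/λ_max}` with
`λ_max = (√β + w₂)/(√β - w₂)`, `β = w₂² + 2(1-w₂²)/(1-w₁)`. -/
theorem stmt_11 (w1 w2 : ℝ) (hw1 : |w1| < 1) (hw2 : 0 < |w2|) (hw2' : |w2| < 1) :
    spectrum ℝ
        ((!![(1:ℝ), w1, w1*w2; w1, 1, w2; w1*w2, w2, 1]) *
          (!![(1:ℝ), w1, w2; w1, 1, w1*w2; w2, w1*w2, 1])⁻¹)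
      = {1, (Real.sqrt (w2^2 + 2*(1 - w2^2)/(1 - w1)) + w2) /
              (Real.sqrt (w2^2 + 2*(1 - w2^2)/(1 - w1)) - w2),
           (Real.sqrt (w2^2 + 2*(1 - w2^2)/(1 - w1)) - w2) /
              (Real.sqrt (w2^2 + 2*(1 - w2^2)/(1 - w1)) + w2)} := by
  obtain ⟨hw1l, hw1r⟩ := abs_lt.mp hw1
  have h1 : (0:ℝ) < 1 - w1 := by linarith
  have h1' : (0:ℝ) < 1 + w1 := by linarith
  have h2 : (0:ℝ) < 1 - w2^2 := by nlinarith [sq_abs w2, abs_nonneg w2]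
  set β : ℝ := w2^2 + 2*(1 - w2^2)/(1 - w1) with hβdef
  set s : ℝ := Real.sqrt β with hsdef
  have hβgt : w2^2 < β := by
    have hpos : 0 < 2*(1-w2^2)/(1-w1) := by positivity
    rw [hβdef]; linarith
  have hβnn : 0 ≤ β := le_trans (sq_nonneg w2) (le_of_lt hβgt)
  have hs2 : s^2 = β := Real.sq_sqrt hβnn
  have hsnn : 0 ≤ s := Real.sqrt_nonneg β
  have hsw2 : |w2| < s := by nlinarith [sq_abs w2, abs_nonneg w2]
  have hsm : 0 < s - w2 := by linarith [le_abs_self w2]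
  have hsp : 0 < s + w2 := by linarith [neg_abs_le w2]
  have hβ' : s^2*(1-w1) = w2^2*(1-w1) + 2*(1-w2^2) := by
    rw [hs2, hβdef]; field_simp
  set A : Matrix (Fin 3) (Fin 3) ℝ := !![(1:ℝ), w1, w1*w2; w1, 1, w2; w1*w2, w2, 1] with hA
  set B : Matrix (Fin 3) (Fin 3) ℝ := !![(1:ℝ), w1, w2; w1, 1, w1*w2; w2, w1*w2, 1] with hB
  have hdetB : B.det = (1-w1^2)*(1-w2^2) := by
    rw [hB, Matrix.det_fin_three]
    simp
    ring
  have h1sq : (0:ℝ) < 1 - w1^2 := by nlinarith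
  have hdetB0 : B.det ≠ 0 := by rw [hdetB]; positivity
  -- the two nontrivial eigenvalues
  have hprod : (s+w2)/(s-w2) * ((s-w2)/(s+w2)) = 1 := by
    field_simp
  have hsum : (s+w2)/(s-w2) + (s-w2)/(s+w2) = 2*(1-w1*w2^2)/(1-w2^2) := by
    rw [div_add_div _ _ (ne_of_gt hsm) (ne_of_gt hsp), div_eq_div_iff (by positivity) (by positivity)]
    linear_combination (-2*w2^2) * hβ'
  ext μ
  simp only [Set.mem_insert_iff, Set.mem_singleton_iff]
  rw [spectrum.mem_iff]
  have key : algebraMap ℝ (Matrix (Fin 3) (Fin 3) ℝ) μ - A * B⁻¹ = (μ • B - A) * B⁻¹ := by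
    rw [Algebra.algebraMap_eq_smul_one, Matrix.sub_mul, Matrix.smul_mul,
      Matrix.mul_nonsing_inv B (isUnit_iff_ne_zero.mpr hdetB0)]
  rw [key, Matrix.isUnit_iff_isUnit_det, Matrix.det_mul, isUnit_iff_ne_zero, not_ne_iff]
  have hdetBinv : B⁻¹.det ≠ 0 := by
    rw [Matrix.det_nonsing_inv, Ring.inverse_eq_inv]
    exact inv_ne_zero hdetB0
  rw [mul_eq_zero, or_iff_left hdetBinv]
  have hdet : (μ • B - A).det
      = (μ - 1) * ((1-w1^2) * ((1-w2^2)*μ^2 - 2*(1-w1*w2^2)*μ + (1-w2^2))) := by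
    rw [Matrix.det_fin_three]
    simp [hA, hB]
    ring
  have hfac : (1-w2^2)*μ^2 - 2*(1-w1*w2^2)*μ + (1-w2^2)
      = (1-w2^2) * ((μ - (s+w2)/(s-w2)) * (μ - (s-w2)/(s+w2))) := by
    have expand : ∀ a b : ℝ, (μ - a)*(μ - b) = μ^2 - (a+b)*μ + a*b := by
      intro a b; ring
    rw [expand, hprod, hsum]
    field_simp
  rw [hdet, hfac]
  constructor
  · intro h
    rcases mul_eq_zero.mp h with h | h
    · left; linarith [sub_eq_zero.mp h]
    rcases mul_eq_zero.mp h with h | h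
    · exact absurd h (ne_of_gt h1sq)
    rcases mul_eq_zero.mp h with h | h
    · exact absurd h (ne_of_gt h2)
    rcases mul_eq_zero.mp h with h | h
    · right; left; linarith [sub_eq_zero.mp h]
    · right; right; linarith [sub_eq_zero.mp h]
  · rintro (h | h | h) <;> subst h <;> simp
end

section
/- For the two 3-node trees above, the vector α₁ = [s₁, s₂, 1] with s₁ = −(w₂ + √β)/2, s₂ = −(w₂ − √β)/2, β = w₂² + 2(1−w₂²)/(1−w₁), satisfies (α₁ᵀΣ₁α₁)/(α₁ᵀΣ₂α₁) = λ_max = (√β + w₂)/(√β − w₂), and the vector α₂ = [s₂, s₁, 1] satisfies (α₂ᵀΣ₁α₂)/(α₂ᵀΣ₂α₂) = 1/λ_max. -/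
open Matrix

/-- The vectors `α₁ = [s₁,s₂,1]` and `α₂ = [s₂,s₁,1]`, with
`s₁ = -(w₂+√β)/2`, `s₂ = -(w₂-√β)/2`, `β = w₂² + 2(1-w₂²)/(1-w₁)`, achieve the
extreme values `λ_max` and `1/λ_max` of the Rayleigh ratio
`αᵀΣ₁α / αᵀΣ₂α` for the two 3-node Gaussian tree covariances. -/
theorem stmt_13 (w1 w2 : ℝ) (hw1 : |w1| < 1) (hw2 : 0 < |w2|) (hw2' : |w2| < 1)
    (hw1ne : w1 ≠ 1) :
    let S1 : Matrix (Fin 3) (Fin 3) ℝ := !![(1:ℝ), w1, w1*w2; w1, 1, w2; w1*w2, w2, 1]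
    let S2 : Matrix (Fin 3) (Fin 3) ℝ := !![(1:ℝ), w1, w2; w1, 1, w1*w2; w2, w1*w2, 1]
    let b : ℝ := w2^2 + 2*(1 - w2^2)/(1 - w1)
    let s1 : ℝ := -(w2 + Real.sqrt b)/2
    let s2 : ℝ := -(w2 - Real.sqrt b)/2
    let lmax : ℝ := (Real.sqrt b + w2) / (Real.sqrt b - w2)
    let a1 : Fin 3 → ℝ := ![s1, s2, 1]
    let a2 : Fin 3 → ℝ := ![s2, s1, 1]
    (a1 ⬝ᵥ (S1 *ᵥ a1)) / (a1 ⬝ᵥ (S2 *ᵥ a1)) = lmax ∧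
    (a2 ⬝ᵥ (S1 *ᵥ a2)) / (a2 ⬝ᵥ (S2 *ᵥ a2)) = 1 / lmax := by
  intro S1 S2 b s1 s2 lmax a1 a2
  have hw1' : 1 - w1 > 0 := by
    have := abs_lt.mp hw1; linarith [this.2]
  have hw22 : 1 - w2^2 > 0 := by
    have := abs_lt.mp hw2'
    nlinarith [this.1, this.2]
  have hbgt : b > w2^2 := by
    have : 2*(1 - w2^2)/(1 - w1) > 0 := by positivity
    simp only [b]; linarith
  have hb0 : 0 ≤ b := le_of_lt (lt_of_le_of_lt (sq_nonneg w2) hbgt)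
  set r := Real.sqrt b with hrdef
  have hr2 : r^2 = b := Real.sq_sqrt hb0
  have hrabs : |w2| < r := by
    have h1 : w2^2 < r^2 := by rw [hr2]; exact hbgt
    have hrnn : 0 ≤ r := Real.sqrt_nonneg b
    nlinarith [abs_nonneg w2, sq_abs w2]
  have hr0 : 0 < r := lt_of_le_of_lt (abs_nonneg w2) hrabs
  have hrw2 : r - w2 > 0 := by
    have := abs_lt.mp hrabs; linarith [this.2]
  have hrw2' : r + w2 > 0 := by
    have := abs_lt.mp hrabs; linarith [this.1]
  have hr2' : (1-w1)*r^2 = (1-w1)*w2^2 + 2*(1-w2^2) := by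
    rw [hr2]; simp only [b]; field_simp
  have hs1 : s1 = -(w2 + r)/2 := rfl
  have hs2 : s2 = -(w2 - r)/2 := rfl
  have hq11 : a1 ⬝ᵥ (S1 *ᵥ a1) = (1-w1)*r*(r+w2) := by
    simp only [a1, S1, hs1, hs2]
    norm_num [Matrix.mulVec, dotProduct, Fin.sum_univ_three, Matrix.cons_val_two, Matrix.head_cons, Matrix.tail_cons]
    linear_combination (-1/2) * hr2'
  have hq12 : a1 ⬝ᵥ (S2 *ᵥ a1) = (1-w1)*r*(r-w2) := by
    simp only [a1, S2, hs1, hs2]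
    norm_num [Matrix.mulVec, dotProduct, Fin.sum_univ_three, Matrix.cons_val_two, Matrix.head_cons, Matrix.tail_cons]
    linear_combination (-1/2) * hr2'
  have hq21 : a2 ⬝ᵥ (S1 *ᵥ a2) = (1-w1)*r*(r-w2) := by
    simp only [a2, S1, hs1, hs2]
    norm_num [Matrix.mulVec, dotProduct, Fin.sum_univ_three, Matrix.cons_val_two, Matrix.head_cons, Matrix.tail_cons]
    linear_combination (-1/2) * hr2'
  have hq22 : a2 ⬝ᵥ (S2 *ᵥ a2) = (1-w1)*r*(r+w2) := by
    simp only [a2, S2, hs1, hs2]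
    norm_num [Matrix.mulVec, dotProduct, Fin.sum_univ_three, Matrix.cons_val_two, Matrix.head_cons, Matrix.tail_cons]
    linear_combination (-1/2) * hr2'
  have hd1 : (1-w1)*r*(r-w2) ≠ 0 := by positivity
  have hd2 : (1-w1)*r*(r+w2) ≠ 0 := by positivity
  constructor
  · rw [hq11, hq12]
    rw [div_eq_div_iff hd1 (ne_of_gt hrw2)]
    ring
  · rw [hq21, hq22]
    have : (1:ℝ) / lmax = (r - w2) / (r + w2) := by
      simp only [lmax, one_div_div]
      rw [hrdef]
    rw [this, div_eq_div_iff hd2 (ne_of_gt hrw2')]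
    ring
end

section
/- Define G₁(x) = (ln x)/(x−1) − ln((ln x)/(x−1)) − 1 and G₂(x) = ln((x+1)/(2√x)) for x > 1. Then G₁(x) ≥ G₂(x) for all x > 1. -/
/-- `G₁(x) = (ln x)/(x-1) - ln((ln x)/(x-1)) - 1` dominates
`G₂(x) = ln((x+1)/(2√x))` on `(1, ∞)`. -/
theorem stmt_15 (x : ℝ) (hx : 1 < x) :
    Real.log ((x + 1) / (2 * Real.sqrt x)) ≤
      Real.log x / (x - 1) - Real.log (Real.log x / (x - 1)) - 1 := by
  have hx0 : (0:ℝ) < x := by linarith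
  have hd : (0:ℝ) < x - 1 := by linarith
  have hL : 0 < Real.log x := Real.log_pos hx
  have hs : 0 < Real.sqrt x := Real.sqrt_pos.mpr hx0
  have hx1 : (0:ℝ) < x + 1 := by linarith
  set L := Real.log x with hLdef
  have h1 : Real.log ((x + 1) / (2 * Real.sqrt x)) =
      Real.log (x+1) - Real.log 2 - L/2 := by
    rw [Real.log_div hx1.ne' (by positivity), Real.log_mul (by norm_num) hs.ne',
        Real.log_sqrt hx0.le]
    ring
  have h2 : Real.log (L / (x-1)) = Real.log L - Real.log (x-1) :=
    Real.log_div hL.ne' hd.ne'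
  have key : 1 - ((x+1)*L)/(2*(x-1)) ≤ Real.log (2*(x-1)/((x+1)*L)) := by
    have h := Real.log_le_sub_one_of_pos
      (show (0:ℝ) < ((x+1)*L)/(2*(x-1)) by positivity)
    have hinv : Real.log (2*(x-1)/((x+1)*L)) = - Real.log (((x+1)*L)/(2*(x-1))) := by
      rw [← Real.log_inv]
      congr 1
      field_simp
    rw [hinv]
    linarith
  have hlogu : Real.log (2*(x-1)/((x+1)*L)) =
      Real.log 2 + Real.log (x-1) - Real.log (x+1) - Real.log L := by
    rw [Real.log_div (by positivity) (by positivity), Real.log_mul (by norm_num) hd.ne',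
        Real.log_mul hx1.ne' hL.ne']
    ring
  rw [h1, h2]
  have harith : L/(x-1) + L/2 - ((x+1)*L)/(2*(x-1)) = 0 := by
    field_simp
    ring
  rw [hlogu] at key
  linarith
end

section
/- For x > 1, let F(x) = ln x · (x³ + 5x² − 5x − 1) − (ln x)² · (2x + 2x²) − 2x³ + 2x² + 2x − 2. Then F(x) ≥ 0 for all x ≥ 1. -/
open Real Set

noncomputable def F0 (y : ℝ) : ℝ := Real.log y * (y^3 + 5*y^2 - 5*y - 1) - (Real.log y)^2 * (2*y + 2*y^2) - 2*y^3 + 2*y^2 + 2*y - 2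
noncomputable def F1 (y : ℝ) : ℝ := -5*y^2 + 9*y - 3 - 1/y + 3*(Real.log y*(y^2+2*y-3)) - 2*((Real.log y)^2*(2*y+1))
noncomputable def F2 (y : ℝ) : ℝ := -7*y + 15 - 9/y + 1/y^2 + Real.log y*(6*y-2-4/y) - 4*(Real.log y)^2
noncomputable def F3 (y : ℝ) : ℝ := -1 - 2/y + 5/y^2 - 2/y^3 + Real.log y*(6-8/y+4/y^2)
noncomputable def F4 (y : ℝ) : ℝ := 6/y - 6/y^2 - 6/y^3 + 6/y^4 + 8*Real.log y*(y-1)/y^3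

lemma nonneg_of_deriv (g g' : ℝ → ℝ)
    (hd : ∀ x ∈ Set.Ici (1:ℝ), HasDerivAt g (g' x) x)
    (h0 : g 1 = 0) (hpos : ∀ x ∈ Set.Ici (1:ℝ), 0 ≤ g' x) :
    ∀ x ∈ Set.Ici (1:ℝ), 0 ≤ g x := by
  intro x hx
  have hmono : MonotoneOn g (Set.Ici 1) := by
    apply monotoneOn_of_deriv_nonneg (convex_Ici 1)
    · exact fun y hy => (hd y hy).continuousAt.continuousWithinAt
    · intro y hy
      rw [interior_Ici] at hy
      exact (hd y (Set.mem_Ici.mpr (le_of_lt hy))).differentiableAt.differentiableWithinAt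
    · intro y hy
      rw [interior_Ici] at hy
      rw [(hd y (Set.mem_Ici.mpr (le_of_lt hy))).deriv]
      exact hpos y (Set.mem_Ici.mpr (le_of_lt hy))
  have h := hmono Set.self_mem_Ici hx hx
  rw [h0] at h
  exact h

lemma hd0 (x : ℝ) (hx : x ∈ Set.Ici (1:ℝ)) : HasDerivAt F0 (F1 x) x := by
  have hx1 : (1:ℝ) ≤ x := hx
  have hx0 : x ≠ 0 := by positivity
  have hl : HasDerivAt Real.log x⁻¹ x := Real.hasDerivAt_log hx0
  have hp : HasDerivAt (fun y : ℝ => y^3 + 5*y^2 - 5*y - 1) (3*x^2 + 10*x - 5) x := by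
    have := (((hasDerivAt_pow 3 x).add ((hasDerivAt_pow 2 x).const_mul 5)).sub ((hasDerivAt_id x).const_mul 5)).sub_const 1
    convert this using 1
    all_goals try with_reducible_and_instances rfl
    all_goals try { funext y; simp only [id_eq, one_div, Pi.add_apply, Pi.sub_apply, Pi.mul_apply, Pi.pow_apply, Pi.inv_apply]; try ring }
    all_goals { push_cast [id_eq, Pi.add_apply, Pi.sub_apply, Pi.mul_apply, Pi.pow_apply]; try field_simp; try ring }
  have hq : HasDerivAt (fun y : ℝ => 2*y + 2*y^2) (2 + 4*x) x := by
    have := ((hasDerivAt_id x).const_mul 2).add ((hasDerivAt_pow 2 x).const_mul 2)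
    convert this using 1
    all_goals try with_reducible_and_instances rfl
    all_goals try { funext y; simp only [id_eq, one_div, Pi.add_apply, Pi.sub_apply, Pi.mul_apply, Pi.pow_apply, Pi.inv_apply]; try ring }
    all_goals { push_cast [id_eq, Pi.add_apply, Pi.sub_apply, Pi.mul_apply, Pi.pow_apply]; try field_simp; try ring }
  have h := ((((((hl.mul hp).sub ((hl.pow 2).mul hq)).sub ((hasDerivAt_pow 3 x).const_mul 2)).add ((hasDerivAt_pow 2 x).const_mul 2)).add ((hasDerivAt_id x).const_mul 2)).sub_const 2)
  unfold F0 F1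
  convert h using 1
  all_goals try with_reducible_and_instances rfl
  all_goals try { funext y; simp only [id_eq, one_div, Pi.add_apply, Pi.sub_apply, Pi.mul_apply, Pi.pow_apply, Pi.inv_apply]; try ring }
  all_goals { push_cast [id_eq, Pi.add_apply, Pi.sub_apply, Pi.mul_apply, Pi.pow_apply]; try field_simp; try ring }

lemma hd1 (x : ℝ) (hx : x ∈ Set.Ici (1:ℝ)) : HasDerivAt F1 (F2 x) x := by
  have hx1 : (1:ℝ) ≤ x := hx
  have hx0 : x ≠ 0 := by positivity
  have hl : HasDerivAt Real.log x⁻¹ x := Real.hasDerivAt_log hx0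
  have hp : HasDerivAt (fun y : ℝ => y^2 + 2*y - 3) (2*x + 2) x := by
    have := ((hasDerivAt_pow 2 x).add ((hasDerivAt_id x).const_mul 2)).sub_const 3
    convert this using 1
    all_goals try with_reducible_and_instances rfl
    all_goals try { funext y; simp only [id_eq, one_div, Pi.add_apply, Pi.sub_apply, Pi.mul_apply, Pi.pow_apply, Pi.inv_apply]; try ring }
    all_goals { push_cast [id_eq, Pi.add_apply, Pi.sub_apply, Pi.mul_apply, Pi.pow_apply]; try field_simp; try ring }
  have hq : HasDerivAt (fun y : ℝ => 2*y + 1) 2 x := by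
    have := ((hasDerivAt_id x).const_mul 2).add_const 1
    convert this using 1
    all_goals try with_reducible_and_instances rfl
    all_goals try { funext y; simp only [id_eq, one_div, Pi.add_apply, Pi.sub_apply, Pi.mul_apply, Pi.pow_apply, Pi.inv_apply]; try ring }
    all_goals { push_cast [id_eq, Pi.add_apply, Pi.sub_apply, Pi.mul_apply, Pi.pow_apply]; try field_simp; try ring }
  have hinv : HasDerivAt (fun y : ℝ => 1/y) (-(1/x^2)) x := by
    simpa [one_div] using (hasDerivAt_inv hx0)
  have h := (((((((hasDerivAt_pow 2 x).const_mul (-5)).add ((hasDerivAt_id x).const_mul 9)).sub_const 3).sub hinv).add ((hl.mul hp).const_mul 3)).sub (((hl.pow 2).mul hq).const_mul 2))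
  unfold F1 F2
  convert h using 1
  all_goals try with_reducible_and_instances rfl
  all_goals try { funext y; simp only [id_eq, one_div, Pi.add_apply, Pi.sub_apply, Pi.mul_apply, Pi.pow_apply, Pi.inv_apply]; try ring }
  all_goals { push_cast [id_eq, Pi.add_apply, Pi.sub_apply, Pi.mul_apply, Pi.pow_apply]; try field_simp; try ring }

lemma hd2 (x : ℝ) (hx : x ∈ Set.Ici (1:ℝ)) : HasDerivAt F2 (F3 x) x := by
  have hx1 : (1:ℝ) ≤ x := hx
  have hx0 : x ≠ 0 := by positivity
  have hx20 : x^2 ≠ 0 := pow_ne_zero 2 hx0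
  have hl : HasDerivAt Real.log x⁻¹ x := Real.hasDerivAt_log hx0
  have hinv : HasDerivAt (fun y : ℝ => 1/y) (-(1/x^2)) x := by
    simpa [one_div] using (hasDerivAt_inv hx0)
  have hinv2 : HasDerivAt (fun y : ℝ => 1/y^2) (-(2*x)/(x^2)^2) x := by
    have := ((hasDerivAt_pow 2 x).inv hx20)
    convert this using 1
    all_goals try with_reducible_and_instances rfl
    all_goals try { funext y; simp only [id_eq, one_div, Pi.add_apply, Pi.sub_apply, Pi.mul_apply, Pi.pow_apply, Pi.inv_apply]; try ring }
    all_goals { push_cast [id_eq, Pi.add_apply, Pi.sub_apply, Pi.mul_apply, Pi.pow_apply]; try field_simp; try ring }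
  have hp : HasDerivAt (fun y : ℝ => 6*y - 2 - 4/y) (6 - 4*(-(1/x^2))) x := by
    have := (((hasDerivAt_id x).const_mul 6).sub_const 2).sub (hinv.const_mul 4)
    convert this using 1
    all_goals try with_reducible_and_instances rfl
    all_goals try { funext y; simp only [id_eq, one_div, Pi.add_apply, Pi.sub_apply, Pi.mul_apply, Pi.pow_apply, Pi.inv_apply]; try ring }
    all_goals { push_cast [id_eq, Pi.add_apply, Pi.sub_apply, Pi.mul_apply, Pi.pow_apply]; try field_simp; try ring }
  have h := (((((((hasDerivAt_id x).const_mul (-7)).add_const 15).sub (hinv.const_mul 9)).add hinv2).add (hl.mul hp)).sub ((hl.pow 2).const_mul 4))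
  unfold F2 F3
  convert h using 1
  all_goals try with_reducible_and_instances rfl
  all_goals try { funext y; simp only [id_eq, one_div, Pi.add_apply, Pi.sub_apply, Pi.mul_apply, Pi.pow_apply, Pi.inv_apply]; try ring }
  all_goals { push_cast [id_eq, Pi.add_apply, Pi.sub_apply, Pi.mul_apply, Pi.pow_apply]; try field_simp; try ring }

lemma hd3 (x : ℝ) (hx : x ∈ Set.Ici (1:ℝ)) : HasDerivAt F3 (F4 x) x := by
  have hx1 : (1:ℝ) ≤ x := hx
  have hx0 : x ≠ 0 := by positivity
  have hx20 : x^2 ≠ 0 := pow_ne_zero 2 hx0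
  have hx30 : x^3 ≠ 0 := pow_ne_zero 3 hx0
  have hl : HasDerivAt Real.log x⁻¹ x := Real.hasDerivAt_log hx0
  have hinv : HasDerivAt (fun y : ℝ => 1/y) (-(1/x^2)) x := by
    simpa [one_div] using (hasDerivAt_inv hx0)
  have hinv2 : HasDerivAt (fun y : ℝ => 1/y^2) (-(2*x)/(x^2)^2) x := by
    have := ((hasDerivAt_pow 2 x).inv hx20)
    convert this using 1
    all_goals try with_reducible_and_instances rfl
    all_goals try { funext y; simp only [id_eq, one_div, Pi.add_apply, Pi.sub_apply, Pi.mul_apply, Pi.pow_apply, Pi.inv_apply]; try ring }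
    all_goals { push_cast [id_eq, Pi.add_apply, Pi.sub_apply, Pi.mul_apply, Pi.pow_apply]; try field_simp; try ring }
  have hinv3 : HasDerivAt (fun y : ℝ => 1/y^3) (-(3*x^2)/(x^3)^2) x := by
    have := ((hasDerivAt_pow 3 x).inv hx30)
    convert this using 1
    all_goals try with_reducible_and_instances rfl
    all_goals try { funext y; simp only [id_eq, one_div, Pi.add_apply, Pi.sub_apply, Pi.mul_apply, Pi.pow_apply, Pi.inv_apply]; try ring }
    all_goals { push_cast [id_eq, Pi.add_apply, Pi.sub_apply, Pi.mul_apply, Pi.pow_apply]; try field_simp; try ring }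
  have hp : HasDerivAt (fun y : ℝ => 6 - 8/y + 4/y^2) (-8*(-(1/x^2)) + 4*(-(2*x)/(x^2)^2)) x := by
    have := ((hasDerivAt_const x (6:ℝ)).sub (hinv.const_mul 8)).add (hinv2.const_mul 4)
    convert this using 1
    all_goals try with_reducible_and_instances rfl
    all_goals try { funext y; simp only [id_eq, one_div, Pi.add_apply, Pi.sub_apply, Pi.mul_apply, Pi.pow_apply, Pi.inv_apply]; try ring }
    all_goals { push_cast [id_eq, Pi.add_apply, Pi.sub_apply, Pi.mul_apply, Pi.pow_apply]; try field_simp; try ring }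
  have h := (((((hasDerivAt_const x (-1:ℝ)).sub (hinv.const_mul 2)).add (hinv2.const_mul 5)).sub (hinv3.const_mul 2)).add (hl.mul hp))
  unfold F3 F4
  convert h using 1
  all_goals try with_reducible_and_instances rfl
  all_goals try { funext y; simp only [id_eq, one_div, Pi.add_apply, Pi.sub_apply, Pi.mul_apply, Pi.pow_apply, Pi.inv_apply]; try ring }
  all_goals { push_cast [id_eq, Pi.add_apply, Pi.sub_apply, Pi.mul_apply, Pi.pow_apply]; try field_simp; try ring }

lemma hF4 (x : ℝ) (hx : x ∈ Set.Ici (1:ℝ)) : 0 ≤ F4 x := by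
  have hx1 : (1:ℝ) ≤ x := hx
  have hx0 : (0:ℝ) < x := by linarith
  have hlog : 0 ≤ Real.log x := Real.log_nonneg hx1
  have key : F4 x = 6*(x-1)^2*(x+1)/x^4 + 8*Real.log x*(x-1)/x^3 := by
    unfold F4; field_simp; ring
  rw [key]
  have h1 : 0 ≤ 6*(x-1)^2*(x+1)/x^4 := by positivity
  have h2 : 0 ≤ 8*Real.log x*(x-1)/x^3 := by
    apply div_nonneg _ (by positivity)
    have : 0 ≤ x - 1 := by linarith
    positivity
  linarith

/-- The key polynomial–logarithmic inequality:
`F(x) = ln x (x³+5x²-5x-1) - (ln x)² (2x+2x²) - 2x³+2x²+2x-2 ≥ 0` for `x ≥ 1`. -/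
theorem stmt_16 (x : ℝ) (hx : 1 ≤ x) :
    0 ≤ Real.log x * (x^3 + 5*x^2 - 5*x - 1) -
        (Real.log x)^2 * (2*x + 2*x^2) - 2*x^3 + 2*x^2 + 2*x - 2 := by
  have h3 : ∀ y ∈ Set.Ici (1:ℝ), 0 ≤ F3 y := by
    apply nonneg_of_deriv F3 F4 hd3 _ hF4
    unfold F3; simp; try norm_num
  have h2 : ∀ y ∈ Set.Ici (1:ℝ), 0 ≤ F2 y := by
    apply nonneg_of_deriv F2 F3 hd2 _ h3
    unfold F2; simp; try norm_num
  have h1 : ∀ y ∈ Set.Ici (1:ℝ), 0 ≤ F1 y := by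
    apply nonneg_of_deriv F1 F2 hd1 _ h2
    unfold F1; simp; try norm_num
  have h0 : ∀ y ∈ Set.Ici (1:ℝ), 0 ≤ F0 y := by
    apply nonneg_of_deriv F0 F1 hd0 _ h1
    unfold F0; simp; try norm_num
  have := h0 x hx
  unfold F0 at this
  exact this
end

section
/- Suppose Σ₁, Σ₂ are N×N positive definite matrices and there exists x ≥ 1 such that 1/x ≤ (αᵀΣ₁α)/(αᵀΣ₂α) ≤ x for all nonzero α ∈ ℝᴺ. Let w ∈ (−1,1), let β₁, β₂ be the j-th columns of Σ₁, Σ₂ respectively, and define the (N+1)×(N+1) matrices Σ₁' = [[Σ₁, wβ₁],[wβ₁ᵀ, 1]] and Σ₂' = [[Σ₂, wβ₂],[wβ₂ᵀ, 1]]. Then 1/x ≤ (γᵀΣ₁'γ)/(γᵀΣ₂'γ) ≤ x for all nonzero γ ∈ ℝᴺ⁺¹. -/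
open Matrix

lemma key_quad (N : ℕ) (S : Matrix (Fin N) (Fin N) ℝ) (j : Fin N)
    (hsym : ∀ i k, S i k = S k i)
    (hjj : S j j = 1) (w t : ℝ) (a : Fin N → ℝ) :
    (Sum.elim a (fun _ : Unit => t)) ⬝ᵥ
      ((Matrix.fromBlocks S (Matrix.of fun i (_ : Unit) => w * S i j)
        (Matrix.of fun (_ : Unit) k => w * S k j) 1) *ᵥ (Sum.elim a (fun _ : Unit => t)))
    = (a + Pi.single j (t*w)) ⬝ᵥ (S *ᵥ (a + Pi.single j (t*w))) + t^2*(1-w^2) := by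
  have h2 : S *ᵥ Pi.single j (t*w) = fun i => S i j * (t*w) := mulVec_single _ _ _
  rw [fromBlocks_mulVec, sumElim_dotProduct_sumElim, mulVec_add, h2,
    add_dotProduct, dotProduct_add, dotProduct_add, single_dotProduct]
  simp only [Sum.elim_comp_inl, Sum.elim_comp_inr, Pi.add_apply]
  simp only [dotProduct, mulVec, Matrix.of_apply, Pi.add_apply, one_apply, dotProduct,
    Finset.univ_unique, Finset.sum_singleton, Pi.single_apply]
  have hja : (∑ k, S j k * a k) = ∑ k, S k j * a k :=
    Finset.sum_congr rfl fun k _ => by rw [hsym]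
  simp only [if_true, mul_add, Finset.sum_add_distrib]
  rw [hja, hjj]
  have e1 : (∑ x, a x * (w * S x j * t)) = w*t*∑ x, S x j * a x := by
    rw [Finset.mul_sum]; exact Finset.sum_congr rfl fun k _ => by ring
  have e2 : (∑ x, a x * (S x j * (t*w))) = w*t*∑ x, S x j * a x := by
    rw [Finset.mul_sum]; exact Finset.sum_congr rfl fun k _ => by ring
  have e3 : (∑ x, w * S x j * a x) = w*∑ x, S x j * a x := by
    rw [Finset.mul_sum]; exact Finset.sum_congr rfl fun k _ => by ring
  rw [e1, e2, e3]
  ring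

/-- Appending an identical leaf (attached to node `j` with weight `w` in both
normalized Gaussian tree covariances) does not enlarge the range of the
Rayleigh quotient of the matrix pencil. -/
theorem stmt_18 (N : ℕ) (S1 S2 : Matrix (Fin N) (Fin N) ℝ)
    (h1 : S1.PosDef) (h2 : S2.PosDef)
    (hdiag : ∀ i, S1 i i = 1 ∧ S2 i i = 1)
    (x : ℝ) (hx : 1 ≤ x)
    (hratio : ∀ a : Fin N → ℝ, a ≠ 0 →
      1/x ≤ (a ⬝ᵥ (S1 *ᵥ a)) / (a ⬝ᵥ (S2 *ᵥ a)) ∧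
      (a ⬝ᵥ (S1 *ᵥ a)) / (a ⬝ᵥ (S2 *ᵥ a)) ≤ x)
    (w : ℝ) (hw : w ∈ Set.Ioo (-1 : ℝ) 1) (j : Fin N) :
    let S1' : Matrix (Fin N ⊕ Unit) (Fin N ⊕ Unit) ℝ :=
      Matrix.fromBlocks S1 (Matrix.of fun i (_ : Unit) => w * S1 i j)
        (Matrix.of fun (_ : Unit) k => w * S1 k j) 1
    let S2' : Matrix (Fin N ⊕ Unit) (Fin N ⊕ Unit) ℝ :=
      Matrix.fromBlocks S2 (Matrix.of fun i (_ : Unit) => w * S2 i j)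
        (Matrix.of fun (_ : Unit) k => w * S2 k j) 1
    ∀ g : Fin N ⊕ Unit → ℝ, g ≠ 0 →
      1/x ≤ (g ⬝ᵥ (S1' *ᵥ g)) / (g ⬝ᵥ (S2' *ᵥ g)) ∧
      (g ⬝ᵥ (S1' *ᵥ g)) / (g ⬝ᵥ (S2' *ᵥ g)) ≤ x := by
  intro S1' S2' g hg
  have hx0 : (0:ℝ) < x := lt_of_lt_of_le one_pos hx
  set a : Fin N → ℝ := g ∘ Sum.inl with ha
  set t : ℝ := g (Sum.inr ()) with ht
  have hg' : g = Sum.elim a (fun _ : Unit => t) := by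
    funext i; cases i with
    | inl i => rfl
    | inr u => cases u; rfl
  have hsym1 : ∀ i k, S1 i k = S1 k i := fun i k => by
    have := congrFun (congrFun h1.isHermitian.symm i) k
    simpa [Matrix.conjTranspose_apply] using this
  have hsym2 : ∀ i k, S2 i k = S2 k i := fun i k => by
    have := congrFun (congrFun h2.isHermitian.symm i) k
    simpa [Matrix.conjTranspose_apply] using this
  set b : Fin N → ℝ := a + Pi.single j (t*w) with hb
  set c : ℝ := t^2*(1-w^2) with hcdef
  have hw2 : w^2 < 1 := by nlinarith [hw.1, hw.2]
  have hc : 0 ≤ c := by nlinarith [sq_nonneg t]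
  set P : ℝ := b ⬝ᵥ (S1 *ᵥ b) with hP
  set Q : ℝ := b ⬝ᵥ (S2 *ᵥ b) with hQ
  have e1 : g ⬝ᵥ (S1' *ᵥ g) = P + c := by
    rw [hg']; exact key_quad N S1 j hsym1 (hdiag j).1 w t a
  have e2 : g ⬝ᵥ (S2' *ᵥ g) = Q + c := by
    rw [hg']; exact key_quad N S2 j hsym2 (hdiag j).2 w t a
  have main : 0 ≤ P ∧ 0 ≤ Q ∧ P ≤ x*Q ∧ Q ≤ x*P ∧ 0 < P + c ∧ 0 < Q + c := by
    by_cases hb0 : b = 0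
    · have hP0 : P = 0 := by simp [hP, hb0]
      have hQ0 : Q = 0 := by simp [hQ, hb0]
      have ht0 : t ≠ 0 := by
        intro h0
        apply hg
        have ha0 : a = 0 := by
          have hbb : a + Pi.single j (t*w) = 0 := hb.symm.trans hb0
          rw [h0, zero_mul, Pi.single_zero, add_zero] at hbb
          exact hbb
        rw [hg', ha0, h0]
        funext i; cases i <;> simp
      have hcpos : 0 < c := by
        have : (0:ℝ) < t^2 := by positivity
        nlinarith
      refine ⟨le_of_eq hP0.symm, le_of_eq hQ0.symm, by nlinarith, by nlinarith, by nlinarith, by nlinarith⟩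
    · have hPpos : 0 < P := by
        have := h1.dotProduct_mulVec_pos hb0
        simpa [hP] using this
      have hQpos : 0 < Q := by
        have := h2.dotProduct_mulVec_pos hb0
        simpa [hQ] using this
      obtain ⟨hr1, hr2⟩ := hratio b hb0
      have hPQ : P ≤ x*Q := by
        rw [div_le_iff₀ hQpos] at hr2; linarith [hr2]
      have hQP : Q ≤ x*P := by
        rw [div_le_div_iff₀ hx0 hQpos] at hr1; linarith [hr1]
      exact ⟨le_of_lt hPpos, le_of_lt hQpos, hPQ, hQP, by positivity, by positivity⟩
  obtain ⟨hP0, hQ0, hPQ, hQP, hPc, hQc⟩ := main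
  rw [e1, e2]
  constructor
  · rw [div_le_div_iff₀ hx0 hQc]
    nlinarith
  · rw [div_le_iff₀ hQc]
    nlinarith
end
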